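/- If 2^ℵ₀ ≤ κ⁺ for an infinite cardinal κ, then the set of all transcendental real numbers is a union of κ-many algebraically independent (over ℚ) sets. -/

import Mathlib

open Cardinal

section Aux

open IntermediateField Set

private theorem key_trans' (F : IntermediateField ℚ ℝ) (x : ℝ) (hx : ¬ IsAlgebraic F x)
    (t : Set ℝ) (ht : ∀ y ∈ t, IsAlgebraic F y) :
    Transcendental (Algebra.adjoin ℚ t) x := by
  intro halg
  apply hx
  set L : IntermediateField F ℝ := algebraicClosure F ℝ with hL
  have hle : Algebra.adjoin ℚ t ≤ (L.restrictScalars ℚ).toSubalgebra := by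
    apply Algebra.adjoin_le
    intro y hy
    exact mem_algebraicClosure_iff.2 (ht y hy)
  have h1 : IsAlgebraic (L.restrictScalars ℚ).toSubalgebra x :=
    halg.tower_top_of_subalgebra_le hle
  have h2 : IsAlgebraic L x := h1
  haveI : Algebra.IsIntegral F L :=
    Algebra.isAlgebraic_iff_isIntegral.1 (algebraicClosure.isAlgebraic F ℝ)
  exact isAlgebraic_iff_isIntegral.2 (isIntegral_trans x (isAlgebraic_iff_isIntegral.1 h2))

private theorem my_insert' {u : Set ℝ} {a : ℝ} (h : AlgebraicIndependent ℚ ((↑) : u → ℝ))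
    (ha' : a ∉ u) (ht : Transcendental (Algebra.adjoin ℚ u) a) :
    AlgebraicIndependent ℚ ((↑) : ↥(insert a u) → ℝ) := by
  classical
  convert ((Subtype.range_coe ▸ h.option_iff_transcendental a).2 ht).comp _
    (Set.subtypeInsertEquivOption ha').injective
  ext x
  by_cases h : ↑x = a <;> simp [h, Set.subtypeInsertEquivOption]

private theorem bot_trans' (x : ℝ) (hx : Transcendental ℚ x) :
    ¬ IsAlgebraic (⊥ : IntermediateField ℚ ℝ) x := by
  intro h
  apply hx
  haveI : Algebra.IsIntegral ℚ (⊥ : IntermediateField ℚ ℝ) := by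
    constructor
    intro y
    obtain ⟨q, hq⟩ := IntermediateField.mem_bot.1 y.2
    have : (algebraMap ℚ (⊥ : IntermediateField ℚ ℝ)) q = y := by
      apply Subtype.ext; rw [← hq]; rfl
    rw [← this]
    exact isIntegral_algebraMap
  exact isAlgebraic_iff_isIntegral.2 (isIntegral_trans x (isAlgebraic_iff_isIntegral.1 h))

private theorem indep_of_levels' {W : Type} [LinearOrder W]
    (K : W → IntermediateField ℚ ℝ) (hK : Monotone K)
    (Λ : ℝ → W)
    (hmem : ∀ z : ℝ, IsAlgebraic (K (Λ z)) z)
    (hmin : ∀ (z : ℝ) (w : W), w < Λ z → ¬ IsAlgebraic (K w) z)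
    (S : Set ℝ) (hT : ∀ x ∈ S, Transcendental ℚ x)
    (hinj : ∀ x ∈ S, ∀ y ∈ S, Λ x = Λ y → x = y) :
    AlgebraicIndependent ℚ ((↑) : S → ℝ) := by
  apply algebraicIndependent_of_finite
  suffices H : ∀ (n : ℕ) (t : Set ℝ), t ⊆ S → t.Finite → t.ncard = n →
      AlgebraicIndependent ℚ ((↑) : t → ℝ) by
    exact fun t ht hf => H t.ncard t ht hf rfl
  intro n
  induction n with
  | zero =>
    intro t _ hf h0
    rw [Set.ncard_eq_zero hf] at h0
    subst h0
    exact algebraicIndependent_empty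
  | succ n IH =>
    intro t ht hf hcard
    have hne : t.Nonempty := by
      rw [Set.nonempty_iff_ne_empty]; intro h; rw [h] at hcard; simp at hcard
    obtain ⟨x, hxt, hmax⟩ := Set.exists_max_image t Λ hf hne
    have hxS := ht hxt
    set t' := t \ {x} with ht'def
    have hft' : t'.Finite := hf.diff
    have hsub' : t' ⊆ S := fun y hy => ht hy.1
    have hindep' : AlgebraicIndependent ℚ ((↑) : t' → ℝ) := by
      apply IH t' hsub' hft'
      rw [ht'def, Set.ncard_diff_singleton_of_mem hxt, hcard]
      omega
    have hlt : ∀ y ∈ t', Λ y < Λ x := by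
      intro y hy
      rcases lt_or_eq_of_le (hmax y hy.1) with h | h
      · exact h
      · exact absurd (hinj y (hsub' hy) x hxS h) hy.2
    have htrans : Transcendental (Algebra.adjoin ℚ (t' : Set ℝ)) x := by
      rcases Set.eq_empty_or_nonempty t' with he | hne'
      · rw [he]
        exact key_trans' ⊥ x (bot_trans' x (hT x hxS)) ∅ (by simp)
      · obtain ⟨y0, hy0, hy0max⟩ := Set.exists_max_image t' Λ hft' hne'
        refine key_trans' (K (Λ y0)) x (hmin x (Λ y0) (hlt y0 hy0)) t' ?_
        intro y hy
        have hle : (K (Λ y)).toSubalgebra ≤ (K (Λ y0)).toSubalgebra :=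
          fun z hz => hK (hy0max y hy) hz
        exact IsAlgebraic.tower_top_of_subalgebra_le hle (hmem y)
    have hx' : x ∉ t' := fun h => h.2 rfl
    have h2 := my_insert' hindep' hx' htrans
    rwa [ht'def, Set.insert_diff_singleton, Set.insert_eq_of_mem hxt] at h2

set_option synthInstance.maxHeartbeats 400000 in
private theorem card_alg' (κ : Cardinal.{0}) (hκ : ℵ₀ ≤ κ) (F : IntermediateField ℚ ℝ)
    (hF : #F ≤ κ) : #{x : ℝ | IsAlgebraic F x} ≤ κ := by
  haveI : NoZeroSMulDivisors ↥F ↥(algebraicClosure ↥F ℝ) := inferInstance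
  have h1 : #(algebraicClosure F ℝ) ≤ max #F ℵ₀ :=
    Algebra.IsAlgebraic.cardinalMk_le_max F (algebraicClosure F ℝ)
  have he : #{x : ℝ | IsAlgebraic F x} ≤ #(algebraicClosure F ℝ) := by
    apply Cardinal.mk_le_mk_of_subset (s := {x : ℝ | IsAlgebraic F x})
      (t := (algebraicClosure F ℝ : Set ℝ)) ?_ |>.trans
    · exact le_of_eq rfl
    · intro x hx
      exact mem_algebraicClosure_iff.2 hx
  exact he.trans (h1.trans (max_le hF hκ))

end Aux

theorem stmt7 (κ : Cardinal.{0}) (hκ : ℵ₀ ≤ κ) (h : 𝔠 ≤ Order.succ κ) :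
    ∃ (ι : Type) (S : ι → Set ℝ), #ι ≤ κ ∧
      (∀ i, AlgebraicIndependent ℚ ((↑) : S i → ℝ)) ∧
      {x : ℝ | Transcendental ℚ x} = ⋃ i, S i := by
  classical
  -- the set of transcendental numbers
  set T : Set ℝ := {x | Transcendental ℚ x} with hTdef
  have hTne : T.Nonempty := by
    refine ⟨liouvilleNumber 3, ?_⟩
    have h3 := transcendental_liouvilleNumber (m := 3) (by norm_num)
    exact fun ha => h3 ((IsFractionRing.isAlgebraic_iff ℤ ℚ ℝ).2 ha)
  haveI : Nonempty ↥T := hTne.to_subtype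
  -- well-ordered index for stages
  set W := (Order.succ κ).ord.ToType with hWdef
  have hWcard : #W = Order.succ κ := by
    rw [hWdef, Cardinal.mk_toType, Cardinal.card_ord]
  haveI hWne : Nonempty W := by
    rw [hWdef, Ordinal.nonempty_toType_iff]
    intro h0
    have hco := Cardinal.card_ord (Order.succ κ)
    rw [h0] at hco
    simp at hco
    have hpos : (0:Cardinal) < Order.succ κ := lt_of_le_of_lt zero_le (Order.lt_succ κ)
    exact absurd hco (ne_of_lt hpos)
  -- surjection from W onto T
  have hTle : #↥T ≤ #W := by
    rw [hWcard]
    exact le_trans (le_trans (Cardinal.mk_set_le T) (le_of_eq Cardinal.mk_real)) h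
  obtain ⟨e⟩ := (Cardinal.le_def _ _).1 hTle
  set f : W → ↥T := Function.invFun e with hfdef
  have hfsurj : Function.Surjective f := Function.invFun_surjective e.injective
  -- the stage fields
  set K : W → IntermediateField ℚ ℝ :=
    fun w => IntermediateField.adjoin ℚ (Subtype.val '' (f '' Set.Iic w)) with hKdef
  have hK : Monotone K := by
    intro a b hab
    exact IntermediateField.adjoin.mono ℚ _ _
      (Set.image_mono (Set.image_mono (Set.Iic_subset_Iic.2 hab)))
  -- every real is algebraic over some stage
  have hmemK : ∀ z : ℝ, {w : W | IsAlgebraic (K w) z}.Nonempty := by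
    intro z
    by_cases hz : Transcendental ℚ z
    · obtain ⟨w, hw⟩ := hfsurj ⟨z, hz⟩
      refine ⟨w, ?_⟩
      have hzK : z ∈ K w := by
        apply IntermediateField.subset_adjoin
        exact ⟨f w, ⟨w, Set.mem_Iic.2 le_rfl, rfl⟩, by rw [hw]⟩
      exact isAlgebraic_algebraMap (⟨z, hzK⟩ : K w)
    · rw [Transcendental, not_not] at hz
      obtain ⟨w⟩ := hWne
      exact ⟨w, hz.tower_top (K w)⟩
  -- the level function
  set Λ : ℝ → W := fun z => (wellFounded_lt (α := W)).min _ (hmemK z) with hΛdef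
  have hmem : ∀ z : ℝ, IsAlgebraic (K (Λ z)) z :=
    fun z => (wellFounded_lt (α := W)).min_mem _ (hmemK z)
  have hmin : ∀ (z : ℝ) (w : W), w < Λ z → ¬ IsAlgebraic (K w) z :=
    fun z w hw halg => (wellFounded_lt (α := W)).not_lt_min _ halg hw
  -- each stage has few algebraic elements
  have hAw : ∀ w : W, #{x : ℝ | IsAlgebraic (K w) x} ≤ κ := by
    intro w
    refine card_alg' κ hκ (K w) ?_
    have hIic : #(Set.Iic w) ≤ κ := by
      have h2 : #(Set.Iio w) < Order.succ κ := Cardinal.mk_Iio_toType_ord_lt w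
      rw [← Set.Iio_insert]
      refine le_trans Cardinal.mk_insert_le ?_
      have h3 := Order.lt_succ_iff.1 h2
      calc #(Set.Iio w) + 1 ≤ κ + 1 := by gcongr
      _ = κ := Cardinal.add_one_eq hκ
    refine (IntermediateField.cardinalMk_adjoin_le ℚ _).trans ?_
    have hQ : #ℚ = ℵ₀ := Cardinal.mkRat
    simp only [sup_le_iff]
    refine ⟨⟨hQ.le.trans hκ, ?_⟩, hκ⟩
    exact (Cardinal.mk_image_le).trans ((Cardinal.mk_image_le).trans hIic)
  -- injections into κ.out
  haveI : Nonempty κ.out := by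
    rw [← Cardinal.mk_ne_zero_iff, Cardinal.mk_out]
    intro h0
    rw [h0] at hκ
    exact absurd (lt_of_lt_of_le Cardinal.aleph0_pos hκ) (lt_irrefl 0)
  have hg : ∀ w : W, Nonempty ({x : ℝ | IsAlgebraic (K w) x} ↪ κ.out) := by
    intro w
    rw [← Cardinal.le_def]
    rw [Cardinal.mk_out]
    exact hAw w
  set g : ∀ w : W, {x : ℝ | IsAlgebraic (K w) x} ↪ κ.out := fun w => (hg w).some with hgdef
  -- the coloring
  set G : W → ℝ → κ.out := fun w z =>
    if hz : IsAlgebraic (K w) z then g w ⟨z, hz⟩ else Classical.arbitrary _ with hGdef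
  set c : ℝ → κ.out := fun z => G (Λ z) z with hcdef
  refine ⟨κ.out, fun j => {x : ℝ | Transcendental ℚ x ∧ c x = j}, ?_, ?_, ?_⟩
  · exact le_of_eq (Cardinal.mk_out κ)
  · intro j
    apply indep_of_levels' K hK Λ hmem hmin
    · exact fun x hx => hx.1
    · intro x hx y hy hΛxy
      have hcx : G (Λ y) x = j := by rw [← hΛxy]; exact hx.2
      have hcy : G (Λ y) y = j := hy.2
      have hax : IsAlgebraic (K (Λ y)) x := by rw [← hΛxy]; exact hmem x
      have hay : IsAlgebraic (K (Λ y)) y := hmem y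
      rw [hGdef] at hcx hcy
      simp only [dif_pos hax] at hcx
      simp only [dif_pos hay] at hcy
      have := (g (Λ y)).injective (hcx.trans hcy.symm)
      exact congrArg Subtype.val this
  · ext z
    simp only [Set.mem_iUnion, Set.mem_setOf_eq]
    exact ⟨fun hz => ⟨c z, hz, rfl⟩, fun ⟨j, hj, _⟩ => hj⟩
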